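/- In H = H_{p,t,s} with t > s, suppose k ∈ (Z/p^{t-s}Z)* satisfies k² - k + 1 ≡ 0 (mod p^{t-s}). Then the elements x = a⁻¹ b a^k and y = a⁻¹ (a⁻¹ b a^k)^(-k) satisfy o(x) = p^t, o(y) = p^s, and ⟨x, y⟩ = H; consequently H has an automorphism sending (a, b) to (x, y). -/

import Mathlib

open scoped commutatorElement

/-- Relations for the inner-abelian non-metacyclic p-group
`H_{p,t,s} = ⟨a, b, c | a^(p^t) = b^(p^s) = c^p = 1, [a,b] = c, [c,a] = [c,b] = 1⟩`. -/
def HRels (p t s : ℕ) : Set (FreeGroup (Fin 3)) :=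
  {FreeGroup.of (0 : Fin 3) ^ p ^ t, FreeGroup.of (1 : Fin 3) ^ p ^ s, FreeGroup.of (2 : Fin 3) ^ p,
   ⁅FreeGroup.of (0 : Fin 3), FreeGroup.of (1 : Fin 3)⁆ * (FreeGroup.of (2 : Fin 3))⁻¹,
   ⁅FreeGroup.of (2 : Fin 3), FreeGroup.of (0 : Fin 3)⁆, ⁅FreeGroup.of (2 : Fin 3), FreeGroup.of (1 : Fin 3)⁆}

/-- The group `H_{p,t,s}` as a presented group. -/
abbrev Hgrp (p t s : ℕ) := PresentedGroup (HRels p t s)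

/-- The generator `a` of `H_{p,t,s}`. -/
def aa (p t s : ℕ) : Hgrp p t s := PresentedGroup.of (0 : Fin 3)

/-- The generator `b` of `H_{p,t,s}`. -/
def bb (p t s : ℕ) : Hgrp p t s := PresentedGroup.of (1 : Fin 3)

/-- The generator `c = [a,b]` of `H_{p,t,s}`. -/
def cc (p t s : ℕ) : Hgrp p t s := PresentedGroup.of (2 : Fin 3)


/-- integer triangular helper -/
def TT (n : ℤ) : ℤ := n * (n - 1) / 2

lemma two_TT (n : ℤ) : 2 * TT n = n * (n - 1) := by
  have h : Even (n * (n - 1)) := by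
    have := Int.even_mul_succ_self (n - 1)
    simpa [mul_comm] using this
  exact Int.two_mul_ediv_two_of_even h

lemma TT_add_one (n : ℤ) : TT (n + 1) = TT n + n := by
  have h : 2 * TT (n + 1) = 2 * (TT n + n) := by
    rw [two_TT]; rw [mul_add, two_TT]; ring
  exact mul_left_cancel₀ two_ne_zero h

lemma TT_sub_one (n : ℤ) : TT (n - 1) = TT n - (n - 1) := by
  have h := TT_add_one (n - 1); simp at h; omega

lemma TT_zero : TT 0 = 0 := rfl

lemma prime_dvd_TT_pow {p : ℕ} (hp : p.Prime) (hodd : Odd p) (m : ℕ) (hm : 1 ≤ m) :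
    (p : ℤ) ∣ TT ((p : ℤ) ^ m) := by
  have h2 : (p : ℤ) ∣ 2 * TT ((p:ℤ)^m) := by
    rw [two_TT]
    exact Dvd.dvd.mul_right (dvd_pow_self _ (by omega)) _
  have hpp : Prime (p : ℤ) := Nat.prime_iff_prime_int.mp hp
  rcases hpp.dvd_mul.mp h2 with h | h
  · exfalso
    have h2' : p ∣ 2 := by exact_mod_cast h
    have := (Nat.prime_dvd_prime_iff_eq hp Nat.prime_two).mp h2'
    subst this
    simp [Nat.odd_iff] at hodd
  · exact h

@[ext] structure MM (p t s : ℕ) where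
  x : ZMod (p ^ t)
  y : ZMod (p ^ s)
  z : ZMod p

namespace MM
variable {p t s : ℕ} [NeZero t] [NeZero s]

def cx (a : ZMod (p ^ t)) : ZMod p := ZMod.castHom (dvd_pow_self p (NeZero.ne t)) (ZMod p) a
def cy (a : ZMod (p ^ s)) : ZMod p := ZMod.castHom (dvd_pow_self p (NeZero.ne s)) (ZMod p) a

lemma cx_add (a b : ZMod (p^t)) : cx (a + b) = cx a + cx b := map_add _ a b
lemma cy_add (a b : ZMod (p^s)) : cy (a + b) = cy a + cy b := map_add _ a b
lemma cx_neg (a : ZMod (p^t)) : cx (-a) = - cx a := map_neg _ a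
lemma cy_neg (a : ZMod (p^s)) : cy (-a) = - cy a := map_neg _ a
lemma cx_intCast (n : ℤ) : cx (p := p) (t := t) (n : ZMod (p^t)) = (n : ZMod p) := map_intCast _ n
lemma cy_intCast (n : ℤ) : cy (p := p) (s := s) (n : ZMod (p^s)) = (n : ZMod p) := map_intCast _ n
@[simp] lemma cx_zero : cx (p := p) (t := t) 0 = 0 := map_zero _
@[simp] lemma cy_zero : cy (p := p) (s := s) 0 = 0 := map_zero _
@[simp] lemma cx_one : cx (p := p) (t := t) 1 = 1 := map_one _
@[simp] lemma cy_one : cy (p := p) (s := s) 1 = 1 := map_one _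
lemma cx_natCast (n : ℕ) : cx (p := p) (t := t) (n : ZMod (p^t)) = (n : ZMod p) := map_natCast _ n
lemma cy_natCast (n : ℕ) : cy (p := p) (s := s) (n : ZMod (p^s)) = (n : ZMod p) := map_natCast _ n
lemma cx_mul (a b : ZMod (p^t)) : cx (a * b) = cx a * cx b := map_mul _ a b
lemma cy_mul (a b : ZMod (p^s)) : cy (a * b) = cy a * cy b := map_mul _ a b

instance : Mul (MM p t s) := ⟨fun u v => ⟨u.x + v.x, u.y + v.y, u.z + v.z - cy u.y * cx v.x⟩⟩
instance : One (MM p t s) := ⟨⟨0, 0, 0⟩⟩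
instance : Inv (MM p t s) := ⟨fun u => ⟨-u.x, -u.y, -u.z - cy u.y * cx u.x⟩⟩

@[simp] lemma mul_x (u v : MM p t s) : (u * v).x = u.x + v.x := rfl
@[simp] lemma mul_y (u v : MM p t s) : (u * v).y = u.y + v.y := rfl
@[simp] lemma mul_z (u v : MM p t s) : (u * v).z = u.z + v.z - cy u.y * cx v.x := rfl
@[simp] lemma one_x : (1 : MM p t s).x = 0 := rfl
@[simp] lemma one_y : (1 : MM p t s).y = 0 := rfl
@[simp] lemma one_z : (1 : MM p t s).z = 0 := rfl
@[simp] lemma inv_x (u : MM p t s) : (u⁻¹).x = -u.x := rfl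
@[simp] lemma inv_y (u : MM p t s) : (u⁻¹).y = -u.y := rfl
@[simp] lemma inv_z (u : MM p t s) : (u⁻¹).z = -u.z - cy u.y * cx u.x := rfl

instance : Group (MM p t s) where
  mul_assoc u v w := by ext <;> simp [cy_add, cx_add] <;> ring
  one_mul u := by ext <;> simp [cy_add, cx_add]
  mul_one u := by ext <;> simp [cy_add, cx_add]
  inv_mul_cancel u := by ext <;> simp [cy_add, cx_add, cy_neg, cx_neg] <;> ring

/-- The general zpow formula. -/
lemma zpow_def (u : MM p t s) (n : ℤ) :
    u ^ n = ⟨(n : ZMod (p^t)) * u.x, (n : ZMod (p^s)) * u.y,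
             (n : ZMod p) * u.z - ((TT n : ℤ) : ZMod p) * (cy u.y * cx u.x)⟩ := by
  induction n using Int.induction_on with
  | zero => simp [TT_zero]; rfl
  | succ n ih =>
      rw [zpow_add_one, ih]
      ext <;> (simp [TT_add_one, cy_add, cx_add, cy_intCast, cx_intCast, cy_natCast, cx_natCast, cy_mul, cx_mul]; push_cast; ring)
  | pred n ih =>
      rw [zpow_sub_one, ih]
      ext <;> (simp [TT_sub_one, cy_add, cx_add, cy_neg, cx_neg, cy_intCast, cx_intCast, cy_natCast, cx_natCast, cy_mul, cx_mul]; push_cast; ring)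

lemma pow_def (u : MM p t s) (n : ℕ) :
    u ^ n = ⟨(n : ZMod (p^t)) * u.x, (n : ZMod (p^s)) * u.y,
             (n : ZMod p) * u.z - ((TT n : ℤ) : ZMod p) * (cy u.y * cx u.x)⟩ := by
  have := zpow_def u (n : ℤ)
  rw [zpow_natCast] at this
  simpa using this

end MM

section RelsHold
variable {p t s : ℕ}

lemma rel_one {r : FreeGroup (Fin 3)} (hr : r ∈ HRels p t s) :
    PresentedGroup.mk (HRels p t s) r = 1 :=
  (QuotientGroup.eq_one_iff r).mpr (Subgroup.subset_normalClosure hr)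

lemma rel1 : aa p t s ^ p ^ t = 1 := by
  have := rel_one (p := p) (t := t) (s := s) (by left; rfl)
  rw [map_pow] at this; exact this

lemma rel2 : bb p t s ^ p ^ s = 1 := by
  have := rel_one (p := p) (t := t) (s := s) (by right; left; rfl)
  rw [map_pow] at this; exact this

lemma rel3 : cc p t s ^ p = 1 := by
  have := rel_one (p := p) (t := t) (s := s) (by right; right; left; rfl)
  rw [map_pow] at this; exact this

lemma rel4 : ⁅aa p t s, bb p t s⁆ = cc p t s := by
  have := rel_one (p := p) (t := t) (s := s) (by right; right; right; left; rfl)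
  rw [map_mul, map_inv, map_commutatorElement] at this
  exact eq_of_mul_inv_eq_one this

lemma rel5 : Commute (cc p t s) (aa p t s) := by
  have := rel_one (p := p) (t := t) (s := s) (by right; right; right; right; left; rfl)
  rw [map_commutatorElement] at this
  exact (commutatorElement_eq_one_iff_commute).mp this

lemma rel6 : Commute (cc p t s) (bb p t s) := by
  have := rel_one (p := p) (t := t) (s := s) (by right; right; right; right; right; rfl)
  rw [map_commutatorElement] at this
  exact (commutatorElement_eq_one_iff_commute).mp this

end RelsHold


section GenGroup
variable {G : Type*} [Group G] {a b c : G}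
variable (hcomm : ⁅a, b⁆ = c) (hca : Commute c a) (hcb : Commute c b)

include hcomm hca hcb in
lemma hba : b * a = a * b * c⁻¹ := by
  have h0 : b * a = c⁻¹ * (a * b) := by rw [← hcomm]; group
  rw [h0, ((hca.mul_right hcb).inv_left).eq]

include hcomm hcb in
lemma hba' : b * a⁻¹ = a⁻¹ * b * c := by
  have h0 : b * a⁻¹ = a⁻¹ * (c * b) := by rw [← hcomm]; group
  rw [h0, hcb.eq, mul_assoc]

include hcomm hca hcb in
lemma b_zpow (m : ℤ) : b * a ^ m = a ^ m * b * c ^ (-m) := by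
  induction m using Int.induction_on with
  | zero => simp
  | succ m ih =>
      have h1 : c ^ (-(m:ℤ)) * a = a * c ^ (-(m:ℤ)) := (hca.zpow_left (-(m:ℤ))).eq
      calc b * a ^ ((m:ℤ) + 1) = b * a ^ (m:ℤ) * a := by rw [zpow_add_one, mul_assoc]
        _ = a ^ (m:ℤ) * b * c ^ (-(m:ℤ)) * a := by rw [ih]
        _ = a ^ (m:ℤ) * b * (c ^ (-(m:ℤ)) * a) := by rw [mul_assoc]
        _ = a ^ (m:ℤ) * b * (a * c ^ (-(m:ℤ))) := by rw [h1]
        _ = a ^ (m:ℤ) * (b * a) * c ^ (-(m:ℤ)) := by simp [mul_assoc]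
        _ = a ^ (m:ℤ) * (a * b * c⁻¹) * c ^ (-(m:ℤ)) := by rw [hba hcomm hca hcb]
        _ = (a ^ (m:ℤ) * a) * b * (c⁻¹ * c ^ (-(m:ℤ))) := by simp [mul_assoc]
        _ = a ^ ((m:ℤ)+1) * b * c ^ (-((m:ℤ)+1)) := by
              rw [← zpow_add_one]
              congr 1
              rw [show (-((m:ℤ)+1)) = -1 + -(m:ℤ) by ring, zpow_add, zpow_neg_one]
  | pred m ih =>
      have h1 : c ^ (-(-(m:ℤ))) * a⁻¹ = a⁻¹ * c ^ (-(-(m:ℤ))) := (hca.zpow_left _).inv_right.eq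
      calc b * a ^ (-(m:ℤ) - 1) = b * a ^ (-(m:ℤ)) * a⁻¹ := by rw [zpow_sub_one, mul_assoc]
        _ = a ^ (-(m:ℤ)) * b * c ^ (-(-(m:ℤ))) * a⁻¹ := by rw [ih]
        _ = a ^ (-(m:ℤ)) * b * (c ^ (-(-(m:ℤ))) * a⁻¹) := by rw [mul_assoc]
        _ = a ^ (-(m:ℤ)) * (b * a⁻¹) * c ^ (-(-(m:ℤ))) := by rw [h1]; simp [mul_assoc]
        _ = a ^ (-(m:ℤ)) * (a⁻¹ * b * c) * c ^ (-(-(m:ℤ))) := by rw [hba' hcomm hcb]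
        _ = (a ^ (-(m:ℤ)) * a⁻¹) * b * (c * c ^ (-(-(m:ℤ)))) := by simp [mul_assoc]
        _ = a ^ (-(m:ℤ)-1) * b * c ^ (-(-(m:ℤ)-1)) := by
              rw [← zpow_sub_one]
              congr 1
              rw [show (-(-(m:ℤ)-1)) = (- -(m:ℤ)) + 1 by ring, zpow_add, zpow_one]
              exact ((Commute.refl c).zpow_right _).eq

include hcomm hca hcb in
lemma bn_zpow (n m : ℤ) : b ^ n * a ^ m = a ^ m * b ^ n * c ^ (-(n * m)) := by
  induction n using Int.induction_on with
  | zero => simp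
  | succ n ih =>
      have hcan : Commute (c ^ (-(m:ℤ))) (a ^ m) := hca.zpow_zpow _ _
      have hcbn : Commute (c ^ (-((n:ℤ) * m))) b := (hcb.zpow_left _)
      calc b ^ ((n:ℤ)+1) * a ^ m = b ^ (n:ℤ) * (b * a ^ m) := by
              rw [zpow_add_one, mul_assoc]
        _ = b ^ (n:ℤ) * (a ^ m * b * c ^ (-m)) := by rw [b_zpow hcomm hca hcb]
        _ = (b ^ (n:ℤ) * a ^ m) * b * c ^ (-m) := by simp [mul_assoc]
        _ = a ^ m * b ^ (n:ℤ) * c ^ (-((n:ℤ)*m)) * b * c ^ (-m) := by rw [ih]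
        _ = a ^ m * b ^ (n:ℤ) * (c ^ (-((n:ℤ)*m)) * b) * c ^ (-m) := by simp [mul_assoc]
        _ = a ^ m * b ^ (n:ℤ) * (b * c ^ (-((n:ℤ)*m))) * c ^ (-m) := by rw [hcbn.eq]
        _ = a ^ m * (b ^ (n:ℤ) * b) * (c ^ (-((n:ℤ)*m)) * c ^ (-m)) := by simp [mul_assoc]
        _ = a ^ m * b ^ ((n:ℤ)+1) * c ^ (-(((n:ℤ)+1) * m)) := by
              rw [← zpow_add_one, ← zpow_add]
              congr 2
              ring
  | pred n ih =>
      have hcbn : Commute (c ^ (-(-(n:ℤ) * m))) b⁻¹ := (hcb.zpow_left _).inv_right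
      have hbam : b⁻¹ * a ^ m = a ^ m * b⁻¹ * c ^ (m : ℤ) := by
        have h := b_zpow hcomm hca hcb (a := a) (b := b) (c := c) m
        have := congrArg (fun x => b⁻¹ * x * (c ^ (-(m:ℤ)))⁻¹ * b⁻¹) h
        simp only [mul_assoc] at this
        calc b⁻¹ * a ^ m = b⁻¹ * (a ^ m * b * c ^ (-m) * (c ^ (-m))⁻¹ * b⁻¹) := by group
          _ = b⁻¹ * (b * a ^ m * (c ^ (-m))⁻¹ * b⁻¹) := by rw [h]
          _ = a ^ m * ((c ^ (-(m:ℤ)))⁻¹ * b⁻¹) := by group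
          _ = a ^ m * (b⁻¹ * (c ^ (-(m:ℤ)))⁻¹) := by
                rw [((hcb.zpow_left (-(m:ℤ))).inv_left.inv_right).eq]
          _ = a ^ m * b⁻¹ * c ^ (m:ℤ) := by group
      calc b ^ (-(n:ℤ)-1) * a ^ m = b ^ (-(n:ℤ)) * (b⁻¹ * a ^ m) := by
              rw [zpow_sub_one, mul_assoc]
        _ = b ^ (-(n:ℤ)) * (a ^ m * b⁻¹ * c ^ (m:ℤ)) := by rw [hbam]
        _ = (b ^ (-(n:ℤ)) * a ^ m) * b⁻¹ * c ^ (m:ℤ) := by simp [mul_assoc]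
        _ = a ^ m * b ^ (-(n:ℤ)) * c ^ (-(-(n:ℤ)*m)) * b⁻¹ * c ^ (m:ℤ) := by rw [ih]
        _ = a ^ m * b ^ (-(n:ℤ)) * (c ^ (-(-(n:ℤ)*m)) * b⁻¹) * c ^ (m:ℤ) := by simp [mul_assoc]
        _ = a ^ m * b ^ (-(n:ℤ)) * (b⁻¹ * c ^ (-(-(n:ℤ)*m))) * c ^ (m:ℤ) := by rw [hcbn.eq]
        _ = a ^ m * (b ^ (-(n:ℤ)) * b⁻¹) * (c ^ (-(-(n:ℤ)*m)) * c ^ (m:ℤ)) := by simp [mul_assoc]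
        _ = a ^ m * b ^ (-(n:ℤ)-1) * c ^ (-((-(n:ℤ)-1) * m)) := by
              rw [← zpow_sub_one, ← zpow_add]
              congr 2
              ring

end GenGroup

section GenGroup2
variable {G : Type*} [Group G] {a b c : G}
variable (hcomm : ⁅a, b⁆ = c) (hca : Commute c a) (hcb : Commute c b)

include hcomm hca hcb in
lemma triple_mul (m1 n1 q1 m2 n2 q2 : ℤ) :
    (a ^ m1 * b ^ n1 * c ^ q1) * (a ^ m2 * b ^ n2 * c ^ q2)
      = a ^ (m1 + m2) * b ^ (n1 + n2) * c ^ (q1 + q2 - n1 * m2) := by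
  have h1 : Commute (c ^ q1) (a ^ m2 * b ^ n2) :=
    (hca.zpow_zpow q1 m2).mul_right (hcb.zpow_zpow q1 n2)
  have h2 : Commute (c ^ (-(n1 * m2))) (b ^ n2) := hcb.zpow_zpow _ _
  calc (a ^ m1 * b ^ n1 * c ^ q1) * (a ^ m2 * b ^ n2 * c ^ q2)
      = a ^ m1 * b ^ n1 * (c ^ q1 * (a ^ m2 * b ^ n2)) * c ^ q2 := by simp [mul_assoc]
    _ = a ^ m1 * b ^ n1 * ((a ^ m2 * b ^ n2) * c ^ q1) * c ^ q2 := by rw [h1.eq]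
    _ = a ^ m1 * ((b ^ n1 * a ^ m2) * b ^ n2) * (c ^ q1 * c ^ q2) := by simp [mul_assoc]
    _ = a ^ m1 * ((a ^ m2 * b ^ n1 * c ^ (-(n1 * m2))) * b ^ n2) * (c ^ q1 * c ^ q2) := by
          rw [bn_zpow hcomm hca hcb]
    _ = a ^ m1 * (a ^ m2 * (b ^ n1 * (c ^ (-(n1 * m2)) * b ^ n2))) * (c ^ q1 * c ^ q2) := by
          simp [mul_assoc]
    _ = a ^ m1 * (a ^ m2 * (b ^ n1 * (b ^ n2 * c ^ (-(n1 * m2))))) * (c ^ q1 * c ^ q2) := by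
          rw [h2.eq]
    _ = (a ^ m1 * a ^ m2) * (b ^ n1 * b ^ n2) * (c ^ (-(n1 * m2)) * (c ^ q1 * c ^ q2)) := by
          simp [mul_assoc]
    _ = a ^ (m1 + m2) * b ^ (n1 + n2) * c ^ (q1 + q2 - n1 * m2) := by
          rw [← zpow_add, ← zpow_add, ← zpow_add, ← zpow_add]
          congr 1
          ring

lemma zpow_reduce {N : ℕ} (hN : a ^ N = 1) {m m' : ℤ} (h : (N : ℤ) ∣ m - m') :
    a ^ m = a ^ m' := by
  obtain ⟨d, hd⟩ := h
  have hm : m = m' + (N : ℤ) * d := by linarith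
  rw [hm, zpow_add, zpow_mul, zpow_natCast, hN, one_zpow, mul_one]

end GenGroup2


section Main
variable (p t s : ℕ) [NeZero t] [NeZero s]

def fgen : Fin 3 → MM p t s := ![⟨1,0,0⟩, ⟨0,1,0⟩, ⟨0,0,1⟩]

lemma hlift : ∀ r ∈ HRels p t s, FreeGroup.lift (fgen p t s) r = 1 := by
  intro r hr
  simp only [HRels, Set.mem_insert_iff, Set.mem_singleton_iff] at hr
  rcases hr with rfl | rfl | rfl | rfl | rfl | rfl <;>
    simp only [map_pow, map_mul, map_inv, map_commutatorElement, FreeGroup.lift_apply_of, fgen,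
      Matrix.cons_val_zero, Matrix.cons_val_one, Matrix.head_cons, Matrix.cons_val_two,
      Matrix.tail_cons]
  · rw [MM.pow_def]; ext <;> simp
  · rw [MM.pow_def]; ext <;> simp
  · rw [MM.pow_def]; ext <;> simp
  · ext <;> simp [commutatorElement_def, MM.cx_neg, MM.cy_neg, MM.cx_add, MM.cy_add]
  · ext <;> simp [commutatorElement_def, MM.cx_neg, MM.cy_neg, MM.cx_add, MM.cy_add]
  · ext <;> simp [commutatorElement_def, MM.cx_neg, MM.cy_neg, MM.cx_add, MM.cy_add]

def piH : Hgrp p t s →* MM p t s := PresentedGroup.toGroup (hlift p t s)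

lemma piH_aa : piH p t s (aa p t s) = ⟨1,0,0⟩ := PresentedGroup.toGroup.of _
lemma piH_bb : piH p t s (bb p t s) = ⟨0,1,0⟩ := PresentedGroup.toGroup.of _
lemma piH_cc : piH p t s (cc p t s) = ⟨0,0,1⟩ := PresentedGroup.toGroup.of _

def gmap (u : MM p t s) : Hgrp p t s :=
  aa p t s ^ (u.x.val : ℤ) * bb p t s ^ (u.y.val : ℤ) * cc p t s ^ (u.z.val : ℤ)

lemma gmap_eq (u : MM p t s) {m n q : ℤ} (hm : (m : ZMod (p^t)) = u.x)
    (hn : (n : ZMod (p^s)) = u.y) (hq : (q : ZMod p) = u.z) [NeZero p] :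
    gmap p t s u = aa p t s ^ m * bb p t s ^ n * cc p t s ^ q := by
  have hx : aa p t s ^ (u.x.val : ℤ) = aa p t s ^ m := by
    apply zpow_reduce rel1
    rw [← ZMod.intCast_zmod_eq_zero_iff_dvd]
    push_cast
    rw [ZMod.natCast_val, ZMod.cast_id, hm, sub_self]
  have hy : bb p t s ^ (u.y.val : ℤ) = bb p t s ^ n := by
    apply zpow_reduce rel2
    rw [← ZMod.intCast_zmod_eq_zero_iff_dvd]
    push_cast
    rw [ZMod.natCast_val, ZMod.cast_id, hn, sub_self]
  have hz : cc p t s ^ (u.z.val : ℤ) = cc p t s ^ q := by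
    apply zpow_reduce rel3
    rw [← ZMod.intCast_zmod_eq_zero_iff_dvd]
    push_cast
    rw [ZMod.natCast_val, ZMod.cast_id, hq, sub_self]
  rw [gmap, hx, hy, hz]

lemma gmap_mul [NeZero p] (u v : MM p t s) :
    gmap p t s (u * v) = gmap p t s u * gmap p t s v := by
  have h : gmap p t s u * gmap p t s v =
      aa p t s ^ ((u.x.val : ℤ) + (v.x.val : ℤ)) * bb p t s ^ ((u.y.val : ℤ) + (v.y.val : ℤ)) *
        cc p t s ^ ((u.z.val : ℤ) + (v.z.val : ℤ) - (u.y.val : ℤ) * (v.x.val : ℤ)) :=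
    triple_mul rel4 rel5 rel6 _ _ _ _ _ _
  rw [h]
  apply gmap_eq
  · push_cast
    rw [ZMod.natCast_val, ZMod.natCast_val, ZMod.cast_id, ZMod.cast_id, MM.mul_x]
  · push_cast
    rw [ZMod.natCast_val, ZMod.natCast_val, ZMod.cast_id, ZMod.cast_id, MM.mul_y]
  · push_cast
    rw [MM.mul_z]
    rw [ZMod.natCast_val, ZMod.natCast_val, ZMod.natCast_val, ZMod.natCast_val]
    rw [ZMod.cast_id, ZMod.cast_id]
    rw [MM.cy, MM.cx, ZMod.castHom_apply, ZMod.castHom_apply]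

lemma gmap_one : gmap p t s 1 = 1 := by
  simp [gmap]

lemma piH_gmap [NeZero p] (u : MM p t s) : piH p t s (gmap p t s u) = u := by
  rw [gmap, map_mul, map_mul, map_zpow, map_zpow, map_zpow, piH_aa, piH_bb, piH_cc,
    MM.zpow_def, MM.zpow_def, MM.zpow_def]
  ext <;> simp [ZMod.natCast_val, ZMod.cast_id]

end Main

section Main2
variable (p t s : ℕ) [NeZero t] [NeZero s] [NeZero p]

lemma gmap_inv (u : MM p t s) : gmap p t s u⁻¹ = (gmap p t s u)⁻¹ := by
  have h : gmap p t s u⁻¹ * gmap p t s u = 1 := by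
    rw [← gmap_mul, inv_mul_cancel, gmap_one]
  exact eq_inv_of_mul_eq_one_left h

def Grange : Subgroup (Hgrp p t s) where
  carrier := Set.range (gmap p t s)
  mul_mem' := by rintro _ _ ⟨u, rfl⟩ ⟨v, rfl⟩; exact ⟨u * v, gmap_mul p t s u v⟩
  one_mem' := ⟨1, gmap_one p t s⟩
  inv_mem' := by rintro _ ⟨u, rfl⟩; exact ⟨u⁻¹, gmap_inv p t s u⟩

lemma gmap_surjective (hp1 : 1 < p) : Function.Surjective (gmap p t s) := by
  haveI : Fact (1 < p ^ t) := ⟨Nat.one_lt_pow (NeZero.ne t) hp1⟩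
  haveI : Fact (1 < p ^ s) := ⟨Nat.one_lt_pow (NeZero.ne s) hp1⟩
  haveI : Fact (1 < p) := ⟨hp1⟩
  intro h
  have hmem : h ∈ Grange p t s := by
    apply PresentedGroup.generated_by
    intro j
    fin_cases j
    · exact ⟨⟨1, 0, 0⟩, by simp [gmap, ZMod.val_one, ZMod.val_zero]; rfl⟩
    · exact ⟨⟨0, 1, 0⟩, by simp [gmap, ZMod.val_one, ZMod.val_zero]; rfl⟩
    · exact ⟨⟨0, 0, 1⟩, by simp [gmap, ZMod.val_one, ZMod.val_zero]; rfl⟩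
  exact hmem

lemma piH_injective (hp1 : 1 < p) : Function.Injective (piH p t s) := by
  intro x y h
  obtain ⟨u, rfl⟩ := gmap_surjective p t s hp1 x
  obtain ⟨v, rfl⟩ := gmap_surjective p t s hp1 y
  rw [piH_gmap, piH_gmap] at h
  rw [h]

instance : Finite (MM p t s) := by
  haveI : NeZero (p ^ t) := ⟨pow_ne_zero t (NeZero.ne p)⟩
  haveI : NeZero (p ^ s) := ⟨pow_ne_zero s (NeZero.ne p)⟩
  exact Finite.of_equiv (ZMod (p ^ t) × ZMod (p ^ s) × ZMod p)
    ⟨fun u => ⟨u.1, u.2.1, u.2.2⟩, fun u => (u.x, u.y, u.z), fun _ => rfl, fun _ => rfl⟩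

lemma Hgrp_finite (hp1 : 1 < p) : Finite (Hgrp p t s) :=
  Finite.of_surjective _ (gmap_surjective p t s hp1)

/-- elements with zero x,y components are central -/
lemma MM.central (u v : MM p t s) (hx : u.x = 0) (hy : u.y = 0) : Commute u v := by
  unfold Commute SemiconjBy
  ext <;> simp [hx, hy] <;> ring

lemma MM.comm_xy (u v : MM p t s) : ⁅u, v⁆.x = 0 ∧ ⁅u, v⁆.y = 0 := by
  constructor <;> simp [commutatorElement_def] <;> ring

lemma MM.pow_p_central (u : MM p t s) (hx : u.x = 0) (hy : u.y = 0) : u ^ p = 1 := by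
  rw [MM.pow_def]
  ext <;> simp [hx, hy]

end Main2

theorem stmt14 (p t s : ℕ) (hp : p.Prime) (hodd : Odd p) (hs : 1 ≤ s) (hts : s < t)
    (k : ℤ) (hku : ¬ (p : ℤ) ∣ k) (hk : (p : ℤ) ^ (t - s) ∣ k ^ 2 - k + 1) :
    orderOf ((aa p t s)⁻¹ * bb p t s * aa p t s ^ k) = p ^ t ∧
    orderOf ((aa p t s)⁻¹ * ((aa p t s)⁻¹ * bb p t s * aa p t s ^ k) ^ (-k)) = p ^ s ∧
    Subgroup.closure {(aa p t s)⁻¹ * bb p t s * aa p t s ^ k,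
        (aa p t s)⁻¹ * ((aa p t s)⁻¹ * bb p t s * aa p t s ^ k) ^ (-k)} =
      (⊤ : Subgroup (Hgrp p t s)) ∧
    ∃ φ : Hgrp p t s ≃* Hgrp p t s,
      φ (aa p t s) = (aa p t s)⁻¹ * bb p t s * aa p t s ^ k ∧
      φ (bb p t s) = (aa p t s)⁻¹ * ((aa p t s)⁻¹ * bb p t s * aa p t s ^ k) ^ (-k) := by
  haveI : NeZero t := ⟨by omega⟩
  haveI : NeZero s := ⟨by omega⟩
  haveI : NeZero p := ⟨hp.pos.ne'⟩
  haveI : Fact p.Prime := ⟨hp⟩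
  have hp1 : 1 < p := hp.one_lt
  have hinj : Function.Injective (piH p t s) := piH_injective p t s hp1
  set x : Hgrp p t s := (aa p t s)⁻¹ * bb p t s * aa p t s ^ k with hxdef
  set y : Hgrp p t s := (aa p t s)⁻¹ * x ^ (-k) with hydef
  -- basic divisibility facts
  have hpdvd : (p : ℤ) ∣ k ^ 2 - k + 1 :=
    dvd_trans (dvd_pow_self (p : ℤ) (by omega : t - s ≠ 0)) hk
  have hpk1 : ¬ (p : ℤ) ∣ k - 1 := by
    intro hdvd
    have h1 : (p : ℤ) ∣ (k - 1) * k := hdvd.mul_right k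
    have h2 : (p : ℤ) ∣ 1 := by
      have : (1 : ℤ) = (k ^ 2 - k + 1) - (k - 1) * k := by ring
      rw [this]
      exact dvd_sub hpdvd h1
    have h3 : p ∣ 1 := by exact_mod_cast h2
    have := Nat.le_of_dvd one_pos h3
    omega
  -- compute piH x
  set X : MM p t s := ⟨(k : ZMod (p ^ t)) - 1, 1, -(k : ZMod p)⟩ with hXdef
  have hπx : piH p t s x = X := by
    rw [hxdef, map_mul, map_mul, map_inv, map_zpow, piH_aa, piH_bb, MM.zpow_def]
    ext <;>
      simp [MM.cx_intCast, MM.cy_intCast, MM.cx_neg, MM.cy_neg, MM.cx_add, MM.cy_add] <;>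
      ring
  -- cast zero helpers
  have e3 : ∀ m : ℕ, 1 ≤ m → ((p ^ m : ℕ) : ZMod p) = 0 := fun m hm =>
    (ZMod.natCast_eq_zero_iff _ _).mpr (dvd_pow_self p (by omega))
  have e4 : ∀ m : ℕ, 1 ≤ m → ((TT ((p ^ m : ℕ) : ℤ) : ℤ) : ZMod p) = 0 := by
    intro m hm
    rw [ZMod.intCast_zmod_eq_zero_iff_dvd,
      show ((p ^ m : ℕ) : ℤ) = (p : ℤ) ^ m from by push_cast; ring]
    exact prime_dvd_TT_pow hp hodd m hm
  -- order of X is p^t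
  have hXpow : X ^ p ^ t = 1 := by
    have e1 : ((p ^ t : ℕ) : ZMod (p ^ t)) = 0 := ZMod.natCast_self _
    have e2 : ((p ^ t : ℕ) : ZMod (p ^ s)) = 0 :=
      (ZMod.natCast_eq_zero_iff _ _).mpr (pow_dvd_pow p hts.le)
    rw [MM.pow_def]
    ext
    · rw [MM.one_x, e1, zero_mul]
    · rw [MM.one_y, e2, zero_mul]
    · rw [MM.one_z, e3 t (by omega), e4 t (by omega), zero_mul, zero_mul, sub_zero]
  have hXpow' : ¬ X ^ p ^ (t - 1) = 1 := by
    intro hone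
    have hx0 : ((p ^ (t - 1) : ℕ) : ZMod (p ^ t)) * X.x = 0 := by
      rw [MM.pow_def] at hone
      have := congrArg MM.x hone
      simpa using this
    have hx0' : (((p : ℤ) ^ (t - 1) * (k - 1) : ℤ) : ZMod (p ^ t)) = 0 := by
      rw [show X.x = ((k - 1 : ℤ) : ZMod (p ^ t)) from by push_cast; rfl] at hx0
      push_cast at hx0 ⊢
      convert hx0 using 2
    rw [ZMod.intCast_zmod_eq_zero_iff_dvd] at hx0'
    have hdvd : (p : ℤ) ∣ k - 1 := by
      have hfac : ((p ^ t : ℕ) : ℤ) = (p : ℤ) ^ (t - 1) * (p : ℤ) := by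
        rw [show t = (t - 1) + 1 from by omega]; push_cast; ring
      rw [hfac] at hx0'
      have hne : ((p : ℤ) ^ (t - 1)) ≠ 0 := pow_ne_zero _ (by exact_mod_cast hp.pos.ne')
      exact (mul_dvd_mul_iff_left hne).mp hx0'
    exact hpk1 hdvd
  have hordX : orderOf X = p ^ t := by
    have ht1 : t - 1 + 1 = t := by omega
    conv_rhs => rw [← ht1]
    exact orderOf_eq_prime_pow hXpow' (by rw [ht1]; exact hXpow)
  have hordx : orderOf x = p ^ t := by
    rw [← orderOf_injective (piH p t s) hinj x, hπx, hordX]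
  -- compute piH y
  obtain ⟨w, hπy⟩ : ∃ w : ZMod p, piH p t s y =
      ⟨((-(k ^ 2 - k + 1) : ℤ) : ZMod (p ^ t)), ((-k : ℤ) : ZMod (p ^ s)), w⟩ := by
    refine ⟨(piH p t s y).z, ?_⟩
    rw [hydef, map_mul, map_inv, map_zpow, piH_aa, hπx, MM.zpow_def]
    ext
    · simp [MM.cx_intCast, MM.cy_intCast]
      push_cast
      ring
    · simp [hXdef]
    · rfl
  set Y : MM p t s := ⟨((-(k ^ 2 - k + 1) : ℤ) : ZMod (p ^ t)), ((-k : ℤ) : ZMod (p ^ s)), w⟩ with hYdef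
  have hYpow : Y ^ p ^ s = 1 := by
    have e1 : ((p ^ s : ℕ) : ZMod (p ^ t)) * Y.x = 0 := by
      rw [show Y.x = ((-(k ^ 2 - k + 1) : ℤ) : ZMod (p ^ t)) from rfl]
      rw [show ((p ^ s : ℕ) : ZMod (p ^ t)) = (((p ^ s : ℕ) : ℤ) : ZMod (p ^ t)) from by
        push_cast; ring]
      rw [← Int.cast_mul, ZMod.intCast_zmod_eq_zero_iff_dvd]
      obtain ⟨d, hd⟩ := hk
      have : ((p ^ s : ℕ) : ℤ) * (-(k ^ 2 - k + 1)) = -(((p : ℤ) ^ t) * d) := by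
        rw [hd, show ((p^s : ℕ):ℤ) = (p:ℤ)^s from by push_cast; ring,
          show (p : ℤ) ^ t = (p:ℤ)^s * (p:ℤ)^(t-s) from by
            rw [← pow_add]; congr 1; omega]
        ring
      rw [this]
      push_cast
      exact dvd_neg.mpr (dvd_mul_right _ d)
    have e2 : ((p ^ s : ℕ) : ZMod (p ^ s)) = 0 := ZMod.natCast_self _
    rw [MM.pow_def]
    ext
    · rw [MM.one_x, e1]
    · rw [MM.one_y, e2, zero_mul]
    · rw [MM.one_z, e3 s (by omega), e4 s (by omega), zero_mul, zero_mul, sub_zero]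
  have hYpow' : ¬ Y ^ p ^ (s - 1) = 1 := by
    intro hone
    have hy0 : ((p ^ (s - 1) : ℕ) : ZMod (p ^ s)) * Y.y = 0 := by
      rw [MM.pow_def] at hone
      have := congrArg MM.y hone
      simpa using this
    have hy0' : (((p : ℤ) ^ (s - 1) * (-k) : ℤ) : ZMod (p ^ s)) = 0 := by
      rw [show Y.y = ((-k : ℤ) : ZMod (p ^ s)) from rfl] at hy0
      push_cast at hy0 ⊢
      convert hy0 using 2
    rw [ZMod.intCast_zmod_eq_zero_iff_dvd] at hy0'
    have hdvd : (p : ℤ) ∣ -k := by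
      have hfac : ((p ^ s : ℕ) : ℤ) = (p : ℤ) ^ (s - 1) * (p : ℤ) := by
        rw [show s = (s - 1) + 1 from by omega]; push_cast; ring
      rw [hfac] at hy0'
      have hne : ((p : ℤ) ^ (s - 1)) ≠ 0 := pow_ne_zero _ (by exact_mod_cast hp.pos.ne')
      exact (mul_dvd_mul_iff_left hne).mp hy0'
    exact hku ((dvd_neg).mp hdvd)
  have hordY : orderOf Y = p ^ s := by
    have hs1 : s - 1 + 1 = s := by omega
    conv_rhs => rw [← hs1]
    exact orderOf_eq_prime_pow hYpow' (by rw [hs1]; exact hYpow)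
  have hordy : orderOf y = p ^ s := by
    rw [← orderOf_injective (piH p t s) hinj y, hπy, hordY]
  -- closure
  have hclosure : Subgroup.closure {x, y} = (⊤ : Subgroup (Hgrp p t s)) := by
    set K := Subgroup.closure ({x, y} : Set (Hgrp p t s)) with hK
    have hxK : x ∈ K := Subgroup.subset_closure (by left; rfl)
    have hyK : y ∈ K := Subgroup.subset_closure (by right; rfl)
    have haK : aa p t s ∈ K := by
      have hid : aa p t s = x ^ (-k) * y⁻¹ := by
        rw [hydef]; group
      rw [hid]
      exact K.mul_mem (K.zpow_mem hxK _) (K.inv_mem hyK)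
    have hbK : bb p t s ∈ K := by
      have hid : bb p t s = aa p t s * x * aa p t s ^ (-k) := by
        rw [hxdef]; group
      rw [hid]
      exact K.mul_mem (K.mul_mem haK hxK) (K.zpow_mem haK _)
    have hcK : cc p t s ∈ K := by
      rw [← rel4, commutatorElement_def]
      exact K.mul_mem (K.mul_mem (K.mul_mem haK hbK) (K.inv_mem haK)) (K.inv_mem hbK)
    rw [eq_top_iff]
    intro g _
    apply PresentedGroup.generated_by
    intro j
    fin_cases j
    · exact haK
    · exact hbK
    · exact hcK
  refine ⟨hordx, hordy, hclosure, ?_⟩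
  -- the automorphism
  have hx_pt : x ^ p ^ t = 1 := by rw [← hordx]; exact pow_orderOf_eq_one x
  have hy_ps : y ^ p ^ s = 1 := by rw [← hordy]; exact pow_orderOf_eq_one y
  have hcomm_central : ∀ g : Hgrp p t s, Commute ⁅x, y⁆ g := by
    intro g
    apply hinj.eq_iff.mp
    rw [map_mul, map_mul, map_commutatorElement]
    have := MM.central p t s ⁅piH p t s x, piH p t s y⁆ (piH p t s g)
      (MM.comm_xy p t s _ _).1 (MM.comm_xy p t s _ _).2
    exact this
  have hc_p : ⁅x, y⁆ ^ p = 1 := by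
    apply hinj
    rw [map_pow, map_commutatorElement, map_one]
    exact MM.pow_p_central p t s _ (MM.comm_xy p t s _ _).1 (MM.comm_xy p t s _ _).2
  set f2 : Fin 3 → Hgrp p t s := ![x, y, ⁅x, y⁆] with hf2
  have hlift2 : ∀ r ∈ HRels p t s, FreeGroup.lift f2 r = 1 := by
    intro r hr
    simp only [HRels, Set.mem_insert_iff, Set.mem_singleton_iff] at hr
    rcases hr with rfl | rfl | rfl | rfl | rfl | rfl <;>
      simp only [map_pow, map_mul, map_inv, map_commutatorElement, FreeGroup.lift_apply_of, hf2,
        Matrix.cons_val_zero, Matrix.cons_val_one, Matrix.head_cons, Matrix.cons_val_two,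
        Matrix.tail_cons]
    · exact hx_pt
    · exact hy_ps
    · exact hc_p
    · group
    · exact commutatorElement_eq_one_iff_commute.mpr (hcomm_central x)
    · exact commutatorElement_eq_one_iff_commute.mpr (hcomm_central y)
  set φ0 : Hgrp p t s →* Hgrp p t s := PresentedGroup.toGroup hlift2 with hφ0
  have hφ0a : φ0 (aa p t s) = x := PresentedGroup.toGroup.of hlift2
  have hφ0b : φ0 (bb p t s) = y := PresentedGroup.toGroup.of hlift2
  have hφ0surj : Function.Surjective φ0 := by
    rw [← MonoidHom.range_eq_top]
    rw [eq_top_iff, ← hclosure]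
    apply Subgroup.closure_le _ |>.mpr
    rintro g (rfl | rfl)
    · exact ⟨aa p t s, hφ0a⟩
    · exact ⟨bb p t s, hφ0b⟩
  haveI : Finite (Hgrp p t s) := Hgrp_finite p t s hp1
  have hφ0inj : Function.Injective φ0 :=
    Finite.injective_iff_surjective.mpr hφ0surj
  exact ⟨MulEquiv.ofBijective φ0 ⟨hφ0inj, hφ0surj⟩, hφ0a, hφ0b⟩
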